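/- Let (Ω, ℱ, ℙ) be a probability space, α a measurable space, X : Ω → α and S : Ω → ℝ measurable, and let ρ be the law of the pair (X, S) on α × ℝ, with first marginal ρ.fst and conditional cumulative distribution functions condCDF ρ a. Assume that for ρ.fst-almost every a the function t ↦ condCDF ρ a t is continuous, and that for some real number T one has ∫_Ω (1 − condCDF ρ (X(ω)) (min(S(ω), T)))^{−1} ℙ(dω) < ∞. Then for every measurable set B ⊆ α with ℙ(X ∈ B) > 0 one has ℙ({X ∈ B} ∩ {S > T}) > 0; equivalently, ℙ(S > T | σ(X)) > 0 almost surely. -/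

import Mathlib

open MeasureTheory ProbabilityTheory Set Filter Topology
open scoped ENNReal NNReal

-- Joint measurability of condCDF
lemma measurable_condCDF_prod {α : Type*} [MeasurableSpace α] (ρ : Measure (α × ℝ)) :
    Measurable (fun p : α × ℝ => condCDF ρ p.1 p.2) := by
  have key : ∀ p : α × ℝ, condCDF ρ p.1 p.2
      = ⨅ q : ℚ, if p.2 < q then condCDF ρ p.1 q else 1 := by
    intro p
    have hbdd : BddBelow (Set.range fun q : ℚ => if p.2 < q then condCDF ρ p.1 q else 1) := by
      refine ⟨0, ?_⟩
      rintro x ⟨q, rfl⟩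
      dsimp only
      split
      · exact condCDF_nonneg ρ p.1 q
      · exact zero_le_one
    refine le_antisymm ?_ ?_
    · refine le_ciInf fun q => ?_
      split_ifs with h
      · exact (condCDF ρ p.1).mono h.le
      · exact condCDF_le_one ρ p.1 p.2
    · haveI : Nonempty { r' : ℚ // p.2 < ↑r' } := by
        obtain ⟨q, hq⟩ := exists_rat_gt p.2
        exact ⟨⟨q, hq⟩⟩
      rw [← (condCDF ρ p.1).iInf_rat_gt_eq p.2]
      refine le_ciInf fun r => ?_
      have h := ciInf_le hbdd r.val
      rwa [if_pos r.prop] at h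
  simp_rw [key]
  refine Measurable.iInf fun q => ?_
  exact Measurable.ite (measurableSet_lt measurable_snd measurable_const)
    ((measurable_condCDF ρ q).comp measurable_fst) measurable_const

-- existence of a point where F = c
lemma exists_eq_of_continuous_stieltjes (F : StieltjesFunction ℝ) (hcont : Continuous F)
    (h0 : Filter.Tendsto F atBot (nhds 0)) {T c : ℝ} (hT : F T = 1)
    (hc0 : 0 < c) (hc1 : c < 1) : ∃ t ≤ T, F t = c := by
  obtain ⟨a, ha⟩ := (h0.eventually_lt_const hc0).exists
  have haT : a ≤ T := by
    by_contra h
    push_neg at h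
    have := F.mono h.le
    rw [hT] at this
    linarith
  have h := intermediate_value_Icc haT hcont.continuousOn
  have hc : c ∈ Icc (F a) (F T) := ⟨ha.le, by rw [hT]; exact hc1.le⟩
  obtain ⟨t, htmem, htc⟩ := h hc
  exact ⟨t, htmem.2, htc⟩

-- measure of sublevel sets
lemma measure_sublevel (F : StieltjesFunction ℝ) (hcont : Continuous F)
    (h0 : Filter.Tendsto F atBot (nhds 0)) (h1 : Filter.Tendsto F atTop (nhds 1))
    {T c : ℝ} (hT : F T = 1) (hc0 : 0 < c) (hc1 : c < 1) :
    F.measure (F ⁻¹' Iic c) = ENNReal.ofReal c := by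
  refine le_antisymm ?_ ?_
  · refine ENNReal.le_of_forall_pos_le_add fun ε hε _ => ?_
    set c' : ℝ := min (c + ε) ((c + 1) / 2) with hc'
    have hcc' : c < c' := lt_min (lt_add_of_pos_right c (by exact_mod_cast hε)) (by linarith)
    have hc'1 : c' < 1 := (min_le_right _ _).trans_lt (by linarith)
    obtain ⟨t', ht'T, ht'⟩ := exists_eq_of_continuous_stieltjes F hcont h0 hT
      (hc0.trans hcc') hc'1
    have hsub : F ⁻¹' Iic c ⊆ Iic t' := by
      intro s hs
      simp only [mem_preimage, mem_Iic] at hs ⊢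
      by_contra h
      push_neg at h
      have := F.mono h.le
      rw [ht'] at this
      linarith
    calc F.measure (F ⁻¹' Iic c) ≤ F.measure (Iic t') := measure_mono hsub
      _ = ENNReal.ofReal (F t' - 0) := F.measure_Iic h0 t'
      _ = ENNReal.ofReal c' := by rw [ht', sub_zero]
      _ ≤ ENNReal.ofReal (c + ε) := ENNReal.ofReal_le_ofReal (min_le_left _ _)
      _ ≤ ENNReal.ofReal c + ε := by
          rw [ENNReal.ofReal_add hc0.le (by positivity)]
          simp [ENNReal.ofReal_coe_nnreal]
  · obtain ⟨t, htT, ht⟩ := exists_eq_of_continuous_stieltjes F hcont h0 hT hc0 hc1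
    have hsub : Iic t ⊆ F ⁻¹' Iic c := by
      intro s hs
      simp only [mem_Iic] at hs
      simp only [mem_preimage, mem_Iic]
      rw [← ht]
      exact F.mono hs
    calc ENNReal.ofReal c = ENNReal.ofReal (F t - 0) := by rw [ht, sub_zero]
      _ = F.measure (Iic t) := (F.measure_Iic h0 t).symm
      _ ≤ F.measure (F ⁻¹' Iic c) := measure_mono hsub

-- key analytic lemma
lemma lintegral_inv_one_sub_condCDF_eq_top (F : StieltjesFunction ℝ) (hcont : Continuous F)
    (h0 : Filter.Tendsto F atBot (nhds 0)) (h1 : Filter.Tendsto F atTop (nhds 1))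
    {T : ℝ} (hT : F T = 1) :
    ∫⁻ s, ENNReal.ofReal ((1 - F (min s T))⁻¹) ∂F.measure = ⊤ := by
  haveI : IsProbabilityMeasure F.measure := F.isProbabilityMeasure h0 h1
  set c : ℕ → ℝ := fun n => 1 - (2⁻¹ : ℝ) ^ (n + 1) with hc
  have hcpos : ∀ n : ℕ, 0 < c n := by
    intro n
    have : (2⁻¹ : ℝ) ^ (n + 1) < 1 := by
      apply pow_lt_one₀ (by norm_num) (by norm_num)
      omega
    simp only [hc]; linarith
  have hclt1 : ∀ n : ℕ, c n < 1 := by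
    intro n
    have : (0:ℝ) < (2⁻¹ : ℝ) ^ (n + 1) := by positivity
    simp only [hc]; linarith
  have hcmono : ∀ n : ℕ, c n < c (n + 1) := by
    intro n
    simp only [hc]
    have : (2⁻¹ : ℝ) ^ (n + 1 + 1) < (2⁻¹ : ℝ) ^ (n + 1) :=
      pow_lt_pow_right_of_lt_one₀ (by norm_num) (by norm_num) (by omega)
    linarith
  set A : ℕ → Set ℝ := fun n => F ⁻¹' Ioc (c n) (c (n + 1)) with hA
  have hAmeas : ∀ n, MeasurableSet (A n) := fun n =>
    hcont.measurable measurableSet_Ioc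
  have hcmono' : StrictMono c := strictMono_nat_of_lt_succ hcmono
  have hAdisj : Pairwise (Function.onFun Disjoint A) := by
    intro i j hij
    refine Disjoint.preimage F ?_
    rcases lt_or_gt_of_ne hij with h | h
    · rw [Set.Ioc_disjoint_Ioc]
      exact le_max_of_le_right ((min_le_left _ _).trans (hcmono'.monotone (by omega)))
    · rw [Set.Ioc_disjoint_Ioc]
      exact le_max_of_le_left ((min_le_right _ _).trans (hcmono'.monotone (by omega)))
  have hAmeasure : ∀ n, F.measure (A n) = ENNReal.ofReal (c (n + 1) - c n) := by
    intro n
    have hsplit : A n = (F ⁻¹' Iic (c (n + 1))) \ (F ⁻¹' Iic (c n)) := by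
      rw [hA, ← preimage_diff]
      congr 1
      ext x
      simp only [mem_Ioc, mem_diff, mem_Iic]
      constructor
      · rintro ⟨h1', h2'⟩; exact ⟨h2', not_le.mpr h1'⟩
      · rintro ⟨h1', h2'⟩; exact ⟨not_le.mp h2', h1'⟩
    rw [hsplit, measure_diff]
    · rw [measure_sublevel F hcont h0 h1 hT (hcpos _) (hclt1 _),
        measure_sublevel F hcont h0 h1 hT (hcpos _) (hclt1 _),
        ENNReal.ofReal_sub _ (hcpos n).le]
    · exact fun x hx => le_trans hx (hcmono n).le
    · exact (hcont.measurable measurableSet_Iic).nullMeasurableSet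
    · exact measure_ne_top _ _
  have hbound : ∀ n, ∀ s ∈ A n,
      ENNReal.ofReal ((2:ℝ) ^ (n + 1)) ≤ ENNReal.ofReal ((1 - F (min s T))⁻¹) := by
    intro n s hs
    simp only [hA, mem_preimage, mem_Ioc] at hs
    have hsT : s ≤ T := by
      by_contra h
      push_neg at h
      have := F.mono h.le
      rw [hT] at this
      have := hs.2
      have := hclt1 (n + 1)
      linarith
    rw [min_eq_left hsT]
    apply ENNReal.ofReal_le_ofReal
    have h1s : 1 - F s < (2⁻¹ : ℝ) ^ (n + 1) := by
      have := hs.1; simp only [hc] at this ⊢; linarith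
    have h2s : 0 < 1 - F s := by
      have := hs.2
      have h3 : (0:ℝ) < (2⁻¹:ℝ) ^ (n + 1 + 1) := by positivity
      simp only [hc] at this
      linarith
    calc (2:ℝ) ^ (n + 1) = ((2⁻¹ : ℝ) ^ (n + 1))⁻¹ := by
          rw [← inv_pow, inv_inv]
      _ ≤ (1 - F s)⁻¹ := by
          apply inv_anti₀ h2s h1s.le
  have hAsum : ∀ n, ENNReal.ofReal (2⁻¹ : ℝ)
      ≤ ∫⁻ s in A n, ENNReal.ofReal ((1 - F (min s T))⁻¹) ∂F.measure := by
    intro n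
    calc ENNReal.ofReal (2⁻¹ : ℝ)
        = ENNReal.ofReal ((2:ℝ) ^ (n + 1)) * F.measure (A n) := by
          rw [hAmeasure n, ← ENNReal.ofReal_mul (by positivity)]
          congr 1
          have h1' : c (n + 1) - c n = (2⁻¹:ℝ) ^ (n+1) - (2⁻¹:ℝ) ^ (n+1+1) := by
            simp only [hc]; ring
          rw [h1']
          have h2' : (2:ℝ) ^ (n+1) * (2⁻¹:ℝ) ^ (n+1) = 1 := by
            rw [← mul_pow]; norm_num
          have h3' : (2:ℝ) ^ (n+1) * (2⁻¹:ℝ) ^ (n+1+1) = 2⁻¹ := by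
            rw [pow_succ (2⁻¹:ℝ) (n+1), ← mul_assoc, h2', one_mul]
          rw [mul_sub, h2', h3']
          norm_num
      _ = ∫⁻ _ in A n, ENNReal.ofReal ((2:ℝ) ^ (n + 1)) ∂F.measure := by
          rw [setLIntegral_const, mul_comm]
      _ ≤ ∫⁻ s in A n, ENNReal.ofReal ((1 - F (min s T))⁻¹) ∂F.measure := by
          refine setLIntegral_mono ?_ (hbound n)
          apply Measurable.ennreal_ofReal
          apply Measurable.inv
          apply Measurable.const_sub
          exact hcont.measurable.comp (measurable_id.min measurable_const)
  have htop : (⊤ : ℝ≥0∞) ≤ ∫⁻ s, ENNReal.ofReal ((1 - F (min s T))⁻¹) ∂F.measure := by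
    calc (⊤ : ℝ≥0∞) = ∑' (_ : ℕ), ENNReal.ofReal (2⁻¹ : ℝ) := by
          rw [ENNReal.tsum_const_eq_top_of_ne_zero (by simp)]
      _ ≤ ∑' n, ∫⁻ s in A n, ENNReal.ofReal ((1 - F (min s T))⁻¹) ∂F.measure :=
          ENNReal.tsum_le_tsum hAsum
      _ = ∫⁻ s in ⋃ n, A n, ENNReal.ofReal ((1 - F (min s T))⁻¹) ∂F.measure :=
          (lintegral_iUnion hAmeas hAdisj _).symm
      _ ≤ ∫⁻ s, ENNReal.ofReal ((1 - F (min s T))⁻¹) ∂F.measure :=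
          setLIntegral_le_lintegral _ _
  exact top_le_iff.mp htop

/-- Lemma 4.3 of the paper: let `X : Ω → α`, `S : Ω → ℝ` be measurable, and let `ρ`
be the law of `(X, S)`. If for `ρ.fst`-almost every `a` the conditional cumulative
distribution function `condCDF ρ a` is continuous, and
`∫ (1 - condCDF ρ (X ω) (min (S ω) T))⁻¹ dP(ω) < ∞`, then for every measurable
`B ⊆ α` with `P(X ∈ B) > 0` one has `P({X ∈ B} ∩ {S > T}) > 0`, i.e.
`P(S > T | σ(X)) > 0` a.s. -/
theorem pos_conditional_prob_of_finite_exp_moment {Ω α : Type*}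
    [MeasurableSpace Ω] [MeasurableSpace α]
    (P : Measure Ω) [IsProbabilityMeasure P]
    (X : Ω → α) (hX : Measurable X) (S : Ω → ℝ) (hS : Measurable S) (T : ℝ)
    (ρ : Measure (α × ℝ)) (hρ : ρ = Measure.map (fun ω => (X ω, S ω)) P)
    (hcont : ∀ᵐ a ∂ρ.fst, Continuous (condCDF ρ a))
    (hint : ∫⁻ ω, ENNReal.ofReal ((1 - condCDF ρ (X ω) (min (S ω) T))⁻¹) ∂P < ⊤) :
    ∀ B : Set α, MeasurableSet B → 0 < P (X ⁻¹' B) →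
      0 < P (X ⁻¹' B ∩ {ω | T < S ω}) := by
  intro B hB hBpos
  by_contra hcon
  push_neg at hcon
  have h0 : P (X ⁻¹' B ∩ {ω | T < S ω}) = 0 := le_antisymm hcon zero_le
  haveI : IsProbabilityMeasure ρ := by
    rw [hρ]; exact Measure.isProbabilityMeasure_map (hX.prodMk hS).aemeasurable
  have hfst : ρ.fst = P.map X := by
    rw [hρ, Measure.fst_map_prodMk hS]
  have hBfst : ρ.fst B = P (X ⁻¹' B) := by
    rw [hfst, Measure.map_apply hX hB]
  -- Step A
  have hstepA : ρ (B ×ˢ Iic T) = ρ.fst B := by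
    rw [hBfst, hρ, Measure.map_apply (hX.prodMk hS) (hB.prod measurableSet_Iic)]
    have hpre : (fun ω => (X ω, S ω)) ⁻¹' (B ×ˢ Iic T) = X ⁻¹' B ∩ S ⁻¹' Iic T := rfl
    rw [hpre]
    refine le_antisymm (measure_mono inter_subset_left) ?_
    have hcover : X ⁻¹' B ⊆ (X ⁻¹' B ∩ S ⁻¹' Iic T) ∪ (X ⁻¹' B ∩ {ω | T < S ω}) := by
      intro ω hω
      by_cases h : S ω ≤ T
      · exact Or.inl ⟨hω, h⟩
      · exact Or.inr ⟨hω, not_le.mp h⟩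
    calc P (X ⁻¹' B) ≤ P ((X ⁻¹' B ∩ S ⁻¹' Iic T) ∪ (X ⁻¹' B ∩ {ω | T < S ω})) :=
          measure_mono hcover
      _ ≤ P (X ⁻¹' B ∩ S ⁻¹' Iic T) + P (X ⁻¹' B ∩ {ω | T < S ω}) := measure_union_le _ _
      _ = P (X ⁻¹' B ∩ S ⁻¹' Iic T) := by rw [h0, add_zero]
  -- Step B : condCDF ρ a T = 1 a.e. on B
  have h1T : ∀ᵐ a ∂ρ.fst.restrict B, condCDF ρ a T = 1 := by
    have hι : ∫⁻ a in B, ENNReal.ofReal (condCDF ρ a T) ∂ρ.fst = ρ.fst B := by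
      rw [setLIntegral_condCDF ρ T hB, hstepA]
    have hmeas : Measurable fun a => ENNReal.ofReal (condCDF ρ a T) :=
      (measurable_condCDF ρ T).ennreal_ofReal
    have hone : ∫⁻ a in B, (1 : ℝ≥0∞) ∂ρ.fst = ρ.fst B := by
      rw [setLIntegral_one]
    have hsub : ∫⁻ a in B,
        ((1 : ℝ≥0∞) - ENNReal.ofReal (condCDF ρ a T)) ∂ρ.fst = 0 := by
      rw [lintegral_sub hmeas (by rw[hι]; exact measure_ne_top _ _)
        (Filter.Eventually.of_forall fun a => by
          simp only
          rw [show (1 : ℝ≥0∞) = ENNReal.ofReal (1:ℝ) by simp]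
          exact ENNReal.ofReal_le_ofReal (condCDF_le_one ρ a T)),
        hι, hone, tsub_self]
    rw [lintegral_eq_zero_iff (f := fun a => (1 : ℝ≥0∞) - ENNReal.ofReal (condCDF ρ a T))
      (measurable_const.sub hmeas)] at hsub
    filter_upwards [hsub] with a ha
    simp only [Pi.zero_apply, tsub_eq_zero_iff_le] at ha
    have := ENNReal.one_le_ofReal.mp ha
    exact le_antisymm (condCDF_le_one ρ a T) this
  -- Step C/D : disintegration and transfer
  set g : α × ℝ → ℝ≥0∞ :=
    fun p => ENNReal.ofReal ((1 - condCDF ρ p.1 (min p.2 T))⁻¹) with hg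
  have hgm : Measurable g := by
    apply Measurable.ennreal_ofReal
    apply Measurable.inv
    apply Measurable.const_sub
    exact (measurable_condCDF_prod ρ).comp
      (measurable_fst.prodMk (measurable_snd.min measurable_const))
  have hK := isCondKernelCDF_condCDF ρ
  have hdis := compProd_toKernel hK
  have hρ_eq : ρ = (Kernel.const Unit ρ.fst ⊗ₖ
      hK.toKernel (fun p : Unit × α => condCDF ρ p.2)) () := by
    rw [hdis, Kernel.const_apply]
  have hInt2 : ∫⁻ a, (∫⁻ s, g (a, s) ∂(condCDF ρ a).measure) ∂ρ.fst < ⊤ := by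
    have e1 : ∫⁻ a, (∫⁻ s, g (a, s) ∂(condCDF ρ a).measure) ∂ρ.fst
        = ∫⁻ p, g p ∂ρ := by
      conv_rhs => rw [hρ_eq]
      rw [Kernel.lintegral_compProd _ _ _ hgm, Kernel.const_apply]
      rfl
    have e2 : ∫⁻ p, g p ∂ρ = ∫⁻ ω, g (X ω, S ω) ∂P := by
      rw [hρ, lintegral_map hgm (hX.prodMk hS)]
    rw [e1, e2]
    exact hint
  have hIm : Measurable fun a => ∫⁻ s, g (a, s) ∂(condCDF ρ a).measure := by
    have h1' : Measurable fun p : Unit × α =>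
        ∫⁻ s, g (p.2, s) ∂(hK.toKernel (fun p : Unit × α => condCDF ρ p.2)) p := by
      apply Measurable.lintegral_kernel_prod_right
      exact hgm.comp ((measurable_snd.comp measurable_fst).prodMk measurable_snd)
    have h2' : Measurable fun a : α => ((), a) := measurable_const.prodMk measurable_id
    have := h1'.comp h2'
    simpa [hK.toKernel_apply, Function.comp_def] using this
  have hItop : ∀ᵐ a ∂ρ.fst, (∫⁻ s, g (a, s) ∂(condCDF ρ a).measure) < ⊤ :=
    ae_lt_top hIm hInt2.ne
  -- combine
  have hres : ρ.fst.restrict B ≠ 0 := by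
    rw [Ne, Measure.restrict_eq_zero, hBfst]
    exact hBpos.ne'
  haveI : (ae (ρ.fst.restrict B)).NeBot := ae_neBot.mpr hres
  obtain ⟨a, ⟨ha1, ha2⟩, ha3⟩ :=
    ((h1T.and (ae_restrict_of_ae hcont)).and (ae_restrict_of_ae hItop)).exists
  have htop := lintegral_inv_one_sub_condCDF_eq_top (condCDF ρ a) ha2
    (tendsto_condCDF_atBot ρ a) (tendsto_condCDF_atTop ρ a) ha1
  rw [show (fun s => ENNReal.ofReal ((1 - condCDF ρ a (min s T))⁻¹))
      = fun s => g (a, s) from rfl] at htop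
  exact absurd htop (by simpa using ha3.ne)
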